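/- Let $K \subset \mathbb{R}^2$ be a compact convex body whose support function $h(\vartheta) = \sup_{y \in K} \langle (\cos\vartheta, \sin\vartheta), y \rangle$ is twice continuously differentiable with $h(\vartheta) + h''(\vartheta) > 0$ for all $\vartheta$. Fix $\vartheta_0 \in \mathbb{R}$ and let $i(\vartheta) = h(\vartheta) n_\vartheta - \big(\int_{\vartheta_0}^{\vartheta} h(\tau)\,d\tau - h'(\vartheta_0)\big) t_\vartheta$ be the left involute of $\partial K$ starting at $x_0 = h(\vartheta_0) n_{\vartheta_0} + h'(\vartheta_0) t_{\vartheta_0}$. Then $i$ is differentiable on $[\vartheta_0, \infty)$ with $i'(\vartheta) = \big(\int_{\vartheta_0}^{\vartheta} h(\tau)\,d\tau + h'(\vartheta) - h'(\vartheta_0)\big) n_\vartheta$, and $i$ is injective on $[\vartheta_0, \vartheta_0 + 2\pi)$. -/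

import Mathlib

open Real MeasureTheory

noncomputable def vec2 (a b : ℝ) : EuclideanSpace ℝ (Fin 2) :=
  (WithLp.equiv 2 (Fin 2 → ℝ)).symm ![a, b]

/-- The outer normal direction `n_ϑ = (cos ϑ, sin ϑ)`. -/
noncomputable def nvec (θ : ℝ) : EuclideanSpace ℝ (Fin 2) := vec2 (Real.cos θ) (Real.sin θ)

/-- The tangent direction `t_ϑ = (-sin ϑ, cos ϑ)`. -/
noncomputable def tvec (θ : ℝ) : EuclideanSpace ℝ (Fin 2) := vec2 (-Real.sin θ) (Real.cos θ)

lemma continuous_nvec : Continuous nvec := by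
  have h1 : Continuous fun θ => (![Real.cos θ, Real.sin θ] : Fin 2 → ℝ) := by
    apply continuous_pi; intro j; fin_cases j
    · exact Real.continuous_cos
    · exact Real.continuous_sin
  exact ((PiLp.continuousLinearEquiv 2 ℝ (fun _ : Fin 2 => ℝ)).symm.continuous).comp h1

lemma vec2_eq (a b : ℝ) : vec2 a b = (PiLp.continuousLinearEquiv 2 ℝ (fun _ : Fin 2 => ℝ)).symm ![a, b] := rfl

lemma hasDerivAt_vec2 {f g : ℝ → ℝ} {f' g' θ : ℝ} (hf : HasDerivAt f f' θ)
    (hg : HasDerivAt g g' θ) :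
    HasDerivAt (fun t => vec2 (f t) (g t)) (vec2 f' g') θ := by
  have h1 : HasDerivAt (fun t => (![f t, g t] : Fin 2 → ℝ)) ![f', g'] θ := by
    apply hasDerivAt_pi.2
    intro j
    fin_cases j
    · simpa using hf
    · simpa using hg
  simp only [vec2_eq]
  exact ((PiLp.continuousLinearEquiv 2 ℝ (fun _ : Fin 2 => ℝ)).symm.toContinuousLinearMap).hasFDerivAt.comp_hasDerivAt θ h1

lemma inner_vec2 (a b c d : ℝ) : (inner ℝ (vec2 a b) (vec2 c d) : ℝ) = a * c + b * d := by
  simp [vec2, PiLp.inner_apply, Fin.sum_univ_two, WithLp.equiv_symm_apply, PiLp.toLp_apply]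
  ring

lemma hasDerivAt_nvec (θ : ℝ) : HasDerivAt nvec (tvec θ) θ := by
  have := hasDerivAt_vec2 (Real.hasDerivAt_cos θ) (Real.hasDerivAt_sin θ)
  exact this

lemma hasDerivAt_tvec (θ : ℝ) : HasDerivAt tvec (-nvec θ) θ := by
  have := hasDerivAt_vec2 ((Real.hasDerivAt_sin θ).neg) (Real.hasDerivAt_cos θ)
  have e : vec2 (-Real.cos θ) (-Real.sin θ) = -nvec θ := by
    simp [vec2, nvec]
    ext j; fin_cases j <;> simp [WithLp.equiv_symm_apply, PiLp.toLp_apply]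
  rw [e] at this; exact this

lemma inner_nvec_tvec (θ m : ℝ) : (inner ℝ (nvec θ) (tvec m) : ℝ) = Real.sin (θ - m) := by
  rw [nvec, tvec, inner_vec2, Real.sin_sub]; ring

/-- The left involute
`i(ϑ) = h(ϑ) n_ϑ - (∫_{ϑ₀}^{ϑ} h - h'(ϑ₀)) t_ϑ` of the boundary of a `C²⁺` convex body
`K ⊆ ℝ²` is differentiable on `[ϑ₀, ∞)` with
`i'(ϑ) = (∫_{ϑ₀}^{ϑ} h + h'(ϑ) - h'(ϑ₀)) n_ϑ`, and it is injective on `[ϑ₀, ϑ₀ + 2π)`. -/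
theorem stmt_5 (K : Set (EuclideanSpace ℝ (Fin 2)))
    (hne : K.Nonempty) (hcp : IsCompact K) (hcv : Convex ℝ K)
    (h : ℝ → ℝ)
    (hsupp : ∀ θ : ℝ, IsLUB ((fun y => (inner ℝ (nvec θ) y : ℝ)) '' K) (h θ))
    (hsm : ContDiff ℝ 2 h) (hpos : ∀ θ, 0 < h θ + deriv (deriv h) θ)
    (θ₀ : ℝ) (i : ℝ → EuclideanSpace ℝ (Fin 2))
    (hi : ∀ θ, i θ = h θ • nvec θ - ((∫ τ in θ₀..θ, h τ) - deriv h θ₀) • tvec θ) :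
    (∀ θ, θ₀ ≤ θ →
      HasDerivAt i (((∫ τ in θ₀..θ, h τ) + deriv h θ - deriv h θ₀) • nvec θ) θ) ∧
    Set.InjOn i (Set.Ico θ₀ (θ₀ + 2 * Real.pi)) := by
  have hcont : Continuous h := hsm.continuous
  have hd1 : ContDiff ℝ 1 (deriv h) := by
    have h2 : ContDiff ℝ ((1:ℕ∞) + 1) h := by norm_num; exact hsm
    exact (contDiff_succ_iff_deriv.mp h2).2.2
  have hdh : ∀ θ, HasDerivAt h (deriv h θ) θ := fun θ =>
    ((hsm.differentiable (by norm_num)) θ).hasDerivAt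
  have hddh : ∀ θ, HasDerivAt (deriv h) (deriv (deriv h) θ) θ := fun θ =>
    ((hd1.differentiable one_ne_zero) θ).hasDerivAt
  have hInt : ∀ θ, HasDerivAt (fun t => ∫ τ in θ₀..t, h τ) (h θ) θ := by
    intro θ
    exact intervalIntegral.integral_hasDerivAt_right (hcont.intervalIntegrable _ _)
      (hcont.stronglyMeasurableAtFilter _ _) hcont.continuousAt
  set s : ℝ → ℝ := fun θ => (∫ τ in θ₀..θ, h τ) + deriv h θ - deriv h θ₀ with hs
  have hds : ∀ θ, HasDerivAt s (h θ + deriv (deriv h) θ) θ := fun θ =>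
    ((hInt θ).add (hddh θ)).sub_const _
  have hderiv : ∀ θ, HasDerivAt i (s θ • nvec θ) θ := by
    intro θ
    have h1 : HasDerivAt (fun t => h t • nvec t)
        (h θ • tvec θ + deriv h θ • nvec θ) θ :=
      (hdh θ).smul (hasDerivAt_nvec θ)
    have h2 : HasDerivAt (fun t => ((∫ τ in θ₀..t, h τ) - deriv h θ₀) • tvec t)
        (((∫ τ in θ₀..θ, h τ) - deriv h θ₀) • (-nvec θ) + h θ • tvec θ) θ :=
      (((hInt θ).sub_const _)).smul (hasDerivAt_tvec θ)
    have h3 := h1.sub h2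
    have : ∀ t, h t • nvec t - ((∫ τ in θ₀..t, h τ) - deriv h θ₀) • tvec t = i t :=
      fun t => (hi t).symm
    have h4 := HasDerivAt.congr_of_eventuallyEq h3 (Filter.Eventually.of_forall fun t => hi t)
    refine h4.congr_deriv ?_
    simp only [hs]; module
  refine ⟨fun θ _ => hderiv θ, ?_⟩
  have hmono : StrictMono s :=
    strictMono_of_deriv_pos (fun θ => by rw [(hds θ).deriv]; exact hpos θ)
  have hscont : Continuous s := by
    rw [continuous_iff_continuousAt]
    exact fun θ => (hds θ).differentiableAt.continuousAt
  have hf : Continuous (fun θ => s θ • nvec θ) := hscont.smul continuous_nvec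
  have key : ∀ a b, θ₀ ≤ a → a < b → b < θ₀ + 2 * π → i a ≠ i b := by
    intro a b ha hab hb heq
    have hb2 : b - a < 2 * π := by linarith
    set m := (a + b) / 2 with hm
    have ham : a < m := by simp only [hm]; linarith
    have hmb : m < b := by simp only [hm]; linarith
    have hbmπ : b - m < π := by simp only [hm]; linarith
    have ha_m : a - m = -(b - m) := by simp only [hm]; ring
    have hgcont : Continuous (fun θ => s θ * Real.sin (θ - m)) :=
      hscont.mul (Real.continuous_sin.comp (continuous_id.sub continuous_const))
    have hIb : i b - i a = ∫ θ in a..b, s θ • nvec θ :=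
      (intervalIntegral.integral_eq_sub_of_hasDerivAt (fun θ _ => hderiv θ)
        (hf.intervalIntegrable a b)).symm
    have hzero : (∫ θ in a..b, s θ • nvec θ) = 0 := by
      rw [← hIb, heq, sub_self]
    have h0 : (∫ θ in a..b, s θ * Real.sin (θ - m)) = 0 := by
      calc (∫ θ in a..b, s θ * Real.sin (θ - m))
          = ∫ θ in a..b, (innerSL ℝ (tvec m)) (s θ • nvec θ) := by
            apply intervalIntegral.integral_congr
            intro θ _
            simp only [innerSL_apply_apply, real_inner_smul_right]
            rw [real_inner_comm, inner_nvec_tvec]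
        _ = (innerSL ℝ (tvec m)) (∫ θ in a..b, s θ • nvec θ) :=
            (innerSL ℝ (tvec m)).intervalIntegral_comp_comm (hf.intervalIntegrable a b)
        _ = 0 := by rw [hzero]; exact map_zero _
    have hsin0 : (∫ θ in a..b, Real.sin (θ - m)) = 0 := by
      rw [intervalIntegral.integral_comp_sub_right (fun x => Real.sin x) m, integral_sin, ha_m,
        Real.cos_neg, sub_self]
    have hg2 : Continuous (fun θ => (s θ - s m) * Real.sin (θ - m)) :=
      (hscont.sub continuous_const).mul
        (Real.continuous_sin.comp (continuous_id.sub continuous_const))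
    have hzero2 : (∫ θ in a..b, (s θ - s m) * Real.sin (θ - m)) = 0 := by
      simp_rw [sub_mul]
      rw [intervalIntegral.integral_sub (hgcont.intervalIntegrable a b)
        ((Continuous.intervalIntegrable (by fun_prop) a b :
          IntervalIntegrable (fun θ => s m * Real.sin (θ - m)) volume a b)), h0,
        intervalIntegral.integral_const_mul, hsin0]
      ring
    have h1 : 0 < ∫ θ in a..m, (s θ - s m) * Real.sin (θ - m) := by
      refine intervalIntegral.intervalIntegral_pos_of_pos_on (hg2.intervalIntegrable a m) (fun x hx => ?_) ham
      apply mul_pos_of_neg_of_neg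
      · exact sub_neg.2 (hmono hx.2)
      · apply Real.sin_neg_of_neg_of_neg_pi_lt
        · linarith [hx.2]
        · linarith [hx.1, hbmπ]
    have h2 : 0 < ∫ θ in m..b, (s θ - s m) * Real.sin (θ - m) := by
      refine intervalIntegral.intervalIntegral_pos_of_pos_on (hg2.intervalIntegrable m b) (fun x hx => ?_) hmb
      apply mul_pos (sub_pos.2 (hmono hx.1))
      apply Real.sin_pos_of_pos_of_lt_pi
      · linarith [hx.1]
      · linarith [hx.2]
    have hadd := intervalIntegral.integral_add_adjacent_intervals (μ := volume)
      (hg2.intervalIntegrable a m) (hg2.intervalIntegrable m b)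
    rw [hzero2] at hadd
    linarith
  intro x hx y hy hxy
  by_contra hne'
  rcases lt_or_gt_of_ne hne' with hlt | hlt
  · exact key x y hx.1 hlt hy.2 hxy
  · exact key y x hy.1 hlt hx.2 hxy.symm
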